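/- Let K ⊆ ℝⁿ be a closed convex cone, G : ℝⁿ → ℝⁿ be differentiable with derivative G', and suppose G(x) + G'(x)*x belongs to the dual cone K* = {y : ⟨y, z⟩ ≥ 0 for all z ∈ K} for every x ∈ K. Let a ∈ ℝⁿ satisfy ⟨a, z⟩ > 0 for every nonzero z ∈ K, and define f(x) := ⟨a, x⟩ + ⟨G(x), x⟩, so ∇f(x) = a + G(x) + G'(x)*x. Then for every closed convex set C ⊆ K, f satisfies condition (B) on C: for every x ∈ C and every nonzero d in the asymptotic cone C_∞ of C, ⟨∇f(x), d⟩ > 0. -/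

import Mathlib

open scoped RealInnerProductSpace

/-- If `K` is a closed convex cone, `G` is differentiable with `G x + G'(x)* x ∈ K*` for
all `x ∈ K`, and `⟪a, z⟫ > 0` for every nonzero `z ∈ K`, then
`f(x) = ⟨a, x⟩ + ⟨G x, x⟩` satisfies condition (B) on every closed convex `C ⊆ K`:
`⟪∇f x, d⟫ > 0` for every `x ∈ C` and nonzero `d` in the asymptotic cone of `C`. -/
theorem condition_B_of_structured (n : ℕ)
    (K : Set (EuclideanSpace ℝ (Fin n))) (hKcl : IsClosed K) (hKconv : Convex ℝ K)
    (hKcone : ∀ c : ℝ, 0 < c → ∀ z ∈ K, c • z ∈ K)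
    (G : EuclideanSpace ℝ (Fin n) → EuclideanSpace ℝ (Fin n)) (hG : Differentiable ℝ G)
    (hdual : ∀ x ∈ K, ∀ z ∈ K,
      0 ≤ ⟪G x + ContinuousLinearMap.adjoint (fderiv ℝ G x) x, z⟫)
    (a : EuclideanSpace ℝ (Fin n)) (ha : ∀ z ∈ K, z ≠ 0 → 0 < ⟪a, z⟫)
    (f : EuclideanSpace ℝ (Fin n) → ℝ) (hf : ∀ z, f z = ⟪a, z⟫ + ⟪G z, z⟫)
    (C : Set (EuclideanSpace ℝ (Fin n))) (hCcl : IsClosed C) (hCconv : Convex ℝ C)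
    (hCK : C ⊆ K) :
    ∀ x ∈ C, ∀ d : EuclideanSpace ℝ (Fin n),
      (∀ y ∈ C, ∀ t : ℝ, 0 ≤ t → y + t • d ∈ C) → d ≠ 0 → 0 < ⟪gradient f x, d⟫ := by
  intro x hx d hC hd
  have hxK : x ∈ K := hCK hx
  -- d belongs to K
  have hdK : d ∈ K := by
    have hmem : ∀ t : ℝ, 0 < t → t⁻¹ • x + d ∈ K := by
      intro t ht
      have h1 : x + t • d ∈ K := hCK (hC x hx t ht.le)
      have h2 := hKcone t⁻¹ (by positivity) _ h1
      simpa [smul_add, smul_smul, inv_mul_cancel₀ ht.ne'] using h2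
    have htend : Filter.Tendsto (fun t : ℝ => t⁻¹ • x + d) Filter.atTop (nhds d) := by
      have h0 : Filter.Tendsto (fun t : ℝ => t⁻¹ • x) Filter.atTop
          (nhds (0 : EuclideanSpace ℝ (Fin n))) := by
        simpa using (tendsto_inv_atTop_zero (𝕜 := ℝ)).smul_const x
      simpa using h0.add_const d
    exact hKcl.mem_of_tendsto htend (Filter.eventually_atTop.2
      ⟨1, fun t ht => hmem t (lt_of_lt_of_le one_pos ht)⟩)
  -- compute the gradient
  have hgrad : gradient f x = a + (G x + ContinuousLinearMap.adjoint (fderiv ℝ G x) x) := by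
    have h1 : HasFDerivAt f (innerSL ℝ a + ((fderivInnerCLM ℝ (G x, x)).comp
        ((fderiv ℝ G x).prod (ContinuousLinearMap.id ℝ _)))) x := by
      have hGi := ((hG x).hasFDerivAt.inner ℝ (hasFDerivAt_id x))
      have h2 : HasFDerivAt (fun z : EuclideanSpace ℝ (Fin n) => ⟪a, z⟫) (innerSL ℝ a) x :=
        (innerSL ℝ a).hasFDerivAt
      have h3 := h2.add hGi
      simp only [id] at h3
      rw [show f = ((fun z => ⟪a, z⟫) + fun t => ⟪G t, t⟫) from funext fun z => by simp [hf]]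
      exact h3
    have h3 : HasGradientAt f (a + (G x + ContinuousLinearMap.adjoint (fderiv ℝ G x) x)) x := by
      rw [hasGradientAt_iff_hasFDerivAt]
      refine h1.congr_fderiv ?_
      ext h
      simp [fderivInnerCLM_apply, real_inner_comm, ContinuousLinearMap.adjoint_inner_left,
        inner_add_left, inner_add_right, mul_comm]
    exact h3.gradient
  rw [hgrad, inner_add_left]
  have := hdual x hxK d hdK
  have := ha d hdK hd
  linarith
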